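/- The set of gaps (A, B) of I such that the cofinality of A is different from the coinitiality of B (the cofinality of B with the reversed order) has cardinality at most |I|. -/

import Mathlib

universe u

/-- The cofinality of a subset of a linear order: the least cardinality of a cofinal
subset. -/
noncomputable def setCofinality {α : Type u} [LinearOrder α] (A : Set α) : Cardinal.{u} :=
  sInf {c : Cardinal.{u} |
    ∃ S : Set α, S ⊆ A ∧ (∀ a ∈ A, ∃ s ∈ S, a ≤ s) ∧ Cardinal.mk ↥S = c}

/-- The coinitiality of a subset of a linear order: the least cardinality of a coinitial
subset (the cofinality with respect to the reversed order). -/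
noncomputable def setCoinitiality {α : Type u} [LinearOrder α] (B : Set α) : Cardinal.{u} :=
  sInf {c : Cardinal.{u} |
    ∃ S : Set α, S ⊆ B ∧ (∀ b ∈ B, ∃ s ∈ S, s ≤ b) ∧ Cardinal.mk ↥S = c}

/-- `(A, B)` is a gap (Dedekind cut) of the linear order. -/
def IsGapPair {α : Type u} [LinearOrder α] (A B : Set α) : Prop :=
  A ∪ B = Set.univ ∧ (∀ a ∈ A, ∀ b ∈ B, a < b) ∧ A.Nonempty ∧ B.Nonempty ∧
    (∀ a ∈ A, ∃ a' ∈ A, a < a') ∧ (∀ b ∈ B, ∃ b' ∈ B, b' < b)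

namespace Stmt13Aux

open Set Cardinal

variable {I : Type u} [LinearOrder I] [Infinite I]

/-- The set of admissible next points of the pinching process for the cut with lower
part `A`, given the previous values `Z`. -/
def ZReg (A : Set I) (Z : Ordinal.{u} → I) (o : Ordinal.{u}) : Set I :=
  {x | ∀ j, ∀ _ : j < o, (Z j ∈ A → Z j < x) ∧ (Z j ∉ A → x < Z j)}

open Classical in
/-- The canonical pinching process for the cut with lower part `A`. -/
noncomputable def ZF (A : Set I) : Ordinal.{u} → I :=
  WellFounded.fix Ordinal.lt_wf fun o ih =>
    if h : {x : I | ∀ j, ∀ hj : j < o,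
        (ih j hj ∈ A → ih j hj < x) ∧ (ih j hj ∉ A → x < ih j hj)}.Nonempty
    then h.some else Classical.arbitrary I

open Classical in
theorem ZF_def (A : Set I) (o : Ordinal.{u}) :
    ZF A o = if h : (ZReg A (ZF A) o).Nonempty then h.some else Classical.arbitrary I :=
  WellFounded.fix_eq _ _ _

theorem ZReg_antitone {A : Set I} {o o' : Ordinal.{u}} (h : o ≤ o') :
    ZReg A (ZF A) o' ⊆ ZReg A (ZF A) o := fun x hx j hj => hx j (lt_of_lt_of_le hj h)

/-- The process terminates: eventually the region of admissible points is empty. -/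
theorem exists_reg_empty (A : Set I) : ∃ o : Ordinal.{u}, ZReg A (ZF A) o = ∅ := by
  by_contra h
  push_neg at h
  have hne : ∀ o : Ordinal.{u}, (ZReg A (ZF A) o).Nonempty := h
  have hmem : ∀ o : Ordinal.{u}, ZF A o ∈ ZReg A (ZF A) o := fun o => by
    rw [ZF_def, dif_pos (hne o)]; exact (hne o).some_mem
  have hinj : Function.Injective (ZF A) := by
    intro i j hij
    rcases lt_trichotomy i j with h' | h' | h'
    · exfalso
      have hc := hmem j i h'
      by_cases hA : ZF A i ∈ A
      · exact absurd (hij ▸ hc.1 hA) (lt_irrefl _)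
      · exact absurd (hij ▸ hc.2 hA) (lt_irrefl _)
    · exact h'
    · exfalso
      have hc := hmem i j h'
      by_cases hA : ZF A j ∈ A
      · exact absurd (hij ▸ hc.1 hA) (lt_irrefl _)
      · exact absurd (hij ▸ hc.2 hA) (lt_irrefl _)
  exact not_small_ordinal.{u} (small_of_injective hinj)

/-- The length of the pinching process. -/
noncomputable def Zδ (A : Set I) : Ordinal.{u} :=
  Ordinal.lt_wf.min {o | ZReg A (ZF A) o = ∅} (exists_reg_empty A)

theorem Zδ_empty (A : Set I) : ZReg A (ZF A) (Zδ A) = ∅ :=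
  WellFounded.min_mem Ordinal.lt_wf {o | ZReg A (ZF A) o = ∅} (exists_reg_empty A)

theorem reg_nonempty {A : Set I} {i : Ordinal.{u}} (h : i < Zδ A) :
    (ZReg A (ZF A) i).Nonempty := by
  by_contra hc
  exact Ordinal.lt_wf.not_lt_min _ (not_nonempty_iff_eq_empty.mp hc) h

theorem ZF_mem {A : Set I} {i : Ordinal.{u}} (h : i < Zδ A) :
    ZF A i ∈ ZReg A (ZF A) i := by
  have hne := reg_nonempty h
  rw [ZF_def, dif_pos hne]
  exact hne.some_mem

theorem zlt {A : Set I} {j i : Ordinal.{u}} (hj : j < i) (hi : i < Zδ A) :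
    (ZF A j ∈ A → ZF A j < ZF A i) ∧ (ZF A j ∉ A → ZF A i < ZF A j) :=
  ZF_mem hi j hj

theorem ZF_inj_branch {A : Set I} {i j : Ordinal.{u}} (hi : i < Zδ A) (hj : j < Zδ A)
    (h : ZF A i = ZF A j) : i = j := by
  rcases lt_trichotomy i j with h' | h' | h'
  · exfalso
    by_cases hA : ZF A i ∈ A
    · exact absurd (h ▸ (zlt h' hj).1 hA) (lt_irrefl _)
    · exact absurd (h ▸ (zlt h' hj).2 hA) (lt_irrefl _)
  · exact h'
  · exfalso
    by_cases hA : ZF A j ∈ A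
    · exact absurd (h ▸ (zlt h' hi).1 hA) (lt_irrefl _)
    · exact absurd (h ▸ (zlt h' hi).2 hA) (lt_irrefl _)

section Cut

variable {A : Set I} (hdc : ∀ ⦃x a : I⦄, a ∈ A → x ≤ a → x ∈ A)

include hdc

/-- The chosen points on the `A` side are cofinal in `A`. -/
theorem exists_high {x : I} (hx : x ∈ A) :
    ∃ j, j < Zδ A ∧ ZF A j ∈ A ∧ x ≤ ZF A j := by
  have hx' : x ∉ ZReg A (ZF A) (Zδ A) := by
    rw [Zδ_empty]; exact notMem_empty x
  obtain ⟨j, hj, hcond⟩ : ∃ j, j < Zδ A ∧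
      ¬((ZF A j ∈ A → ZF A j < x) ∧ (ZF A j ∉ A → x < ZF A j)) := by
    by_contra hc
    push_neg at hc
    exact hx' fun j hj => hc j hj
  by_cases hA : ZF A j ∈ A
  · refine ⟨j, hj, hA, ?_⟩
    by_contra hxle
    exact hcond ⟨fun _ => not_le.mp hxle, fun hn => absurd hA hn⟩
  · by_cases hlt : x < ZF A j
    · exact absurd ⟨fun hm => absurd hm hA, fun _ => hlt⟩ hcond
    · exact absurd (hdc hx (not_lt.mp hlt)) hA

/-- The chosen points on the `B` side are coinitial in `Aᶜ`. -/
theorem exists_low {x : I} (hx : x ∉ A) :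
    ∃ j, j < Zδ A ∧ ZF A j ∉ A ∧ ZF A j ≤ x := by
  have hx' : x ∉ ZReg A (ZF A) (Zδ A) := by
    rw [Zδ_empty]; exact notMem_empty x
  obtain ⟨j, hj, hcond⟩ : ∃ j, j < Zδ A ∧
      ¬((ZF A j ∈ A → ZF A j < x) ∧ (ZF A j ∉ A → x < ZF A j)) := by
    by_contra hc
    push_neg at hc
    exact hx' fun j hj => hc j hj
  by_cases hA : ZF A j ∈ A
  · by_cases hlt : ZF A j < x
    · exact absurd ⟨fun _ => hlt, fun hn => absurd hA hn⟩ hcond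
    · exact absurd (hdc hA (not_lt.mp hlt)) hx
  · refine ⟨j, hj, hA, ?_⟩
    by_contra hxle
    exact hcond ⟨fun hm => absurd hm hA, fun _ => not_le.mp hxle⟩

theorem A_char : A = {x | ∃ j, j < Zδ A ∧ ZF A j ∈ A ∧ x ≤ ZF A j} := by
  ext x
  constructor
  · intro hx
    exact exists_high hdc hx
  · rintro ⟨j, _, hjA, hle⟩
    exact hdc hjA hle

end Cut

/-- `i` is a point after which the process stays on one side. -/
def EV (A : Set I) (i : Ordinal.{u}) : Prop :=
  i < Zδ A ∧ ∀ j, i ≤ j → j < Zδ A → ((ZF A j ∈ A) ↔ (ZF A i ∈ A))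

theorem dichotomy (A : Set I) :
    (∃ i, EV A i) ∨
      ((∀ i, i < Zδ A → ∃ j, i ≤ j ∧ j < Zδ A ∧ ZF A j ∈ A) ∧
       (∀ i, i < Zδ A → ∃ j, i ≤ j ∧ j < Zδ A ∧ ZF A j ∉ A)) := by
  by_cases h : ∃ i, EV A i
  · exact Or.inl h
  · right
    push_neg at h
    have key : ∀ i, i < Zδ A → ∃ j, i ≤ j ∧ j < Zδ A ∧ ¬((ZF A j ∈ A) ↔ (ZF A i ∈ A)) := by
      intro i hi
      have hne := h i
      rw [EV] at hne
      have h2 : ¬ ∀ j, i ≤ j → j < Zδ A → ((ZF A j ∈ A) ↔ (ZF A i ∈ A)) := fun hc => hne ⟨hi, hc⟩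
      push_neg at h2
      obtain ⟨j, hj1, hj2, hj3⟩ := h2
      refine ⟨j, hj1, hj2, ?_⟩
      rcases hj3 with ⟨ha, hb⟩ | ⟨ha, hb⟩
      · intro hiff; exact hb (hiff.mp ha)
      · intro hiff; exact ha (hiff.mpr hb)
    constructor
    · intro i hi
      obtain ⟨j, h1, h2, h3⟩ := key i hi
      by_cases hA : ZF A i ∈ A
      · exact ⟨i, le_rfl, hi, hA⟩
      · refine ⟨j, h1, h2, ?_⟩
        by_contra hjA
        exact h3 (iff_of_false hjA hA)
    · intro i hi
      obtain ⟨j, h1, h2, h3⟩ := key i hi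
      by_cases hA : ZF A i ∈ A
      · refine ⟨j, h1, h2, ?_⟩
        intro hjA
        exact h3 (iff_of_true hjA hA)
      · exact ⟨i, le_rfl, hi, hA⟩

theorem setCofinality_le {A S : Set I} (h1 : S ⊆ A) (h2 : ∀ a ∈ A, ∃ s ∈ S, a ≤ s) :
    setCofinality A ≤ Cardinal.mk ↥S :=
  csInf_le (OrderBot.bddBelow _) ⟨S, h1, h2, rfl⟩

theorem setCoinitiality_le {B S : Set I} (h1 : S ⊆ B) (h2 : ∀ b ∈ B, ∃ s ∈ S, s ≤ b) :
    setCoinitiality B ≤ Cardinal.mk ↥S :=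
  csInf_le (OrderBot.bddBelow _) ⟨S, h1, h2, rfl⟩

theorem exists_coinitial_real (B : Set I) :
    ∃ S : Set I, S ⊆ B ∧ (∀ b ∈ B, ∃ s ∈ S, s ≤ b) ∧ Cardinal.mk ↥S = setCoinitiality B :=
  csInf_mem (s := {c : Cardinal.{u} |
      ∃ S : Set I, S ⊆ B ∧ (∀ b ∈ B, ∃ s ∈ S, s ≤ b) ∧ Cardinal.mk ↥S = c})
    ⟨Cardinal.mk ↥B, B, subset_rfl, fun b hb => ⟨b, hb, le_rfl⟩, rfl⟩

theorem exists_cofinal_real (A : Set I) :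
    ∃ S : Set I, S ⊆ A ∧ (∀ a ∈ A, ∃ s ∈ S, a ≤ s) ∧ Cardinal.mk ↥S = setCofinality A :=
  csInf_mem (s := {c : Cardinal.{u} |
      ∃ S : Set I, S ⊆ A ∧ (∀ a ∈ A, ∃ s ∈ S, a ≤ s) ∧ Cardinal.mk ↥S = c})
    ⟨Cardinal.mk ↥A, A, subset_rfl, fun a ha => ⟨a, ha, le_rfl⟩, rfl⟩

section Pinch

variable {A : Set I} (hdc : ∀ ⦃x a : I⦄, a ∈ A → x ≤ a → x ∈ A)

include hdc

/-- If both sides of the process are active cofinally often, then the cofinality of `A`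
is at most the coinitiality of `Aᶜ`. -/
theorem pinch_le₁ (hnomin : ∀ b ∈ Aᶜ, ∃ b' ∈ Aᶜ, b' < b)
    (hAcof : ∀ i, i < Zδ A → ∃ j, i ≤ j ∧ j < Zδ A ∧ ZF A j ∈ A)
    (hBcof : ∀ i, i < Zδ A → ∃ j, i ≤ j ∧ j < Zδ A ∧ ZF A j ∉ A) :
    setCofinality A ≤ setCoinitiality Aᶜ := by
  obtain ⟨T, hTB, hTcoi, hTcard⟩ := exists_coinitial_real (Aᶜ : Set I)
  have hjbex : ∀ b : ↥T, ∃ j, j < Zδ A ∧ ZF A j ∉ A ∧ ZF A j < (b : I) := by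
    intro b
    obtain ⟨b', hb', hlt⟩ := hnomin (b : I) (hTB b.2)
    obtain ⟨j, hj, hjB, hle⟩ := exists_low hdc hb'
    exact ⟨j, hj, hjB, lt_of_le_of_lt hle hlt⟩
  choose jb hjb1 hjb2 hjb3 using hjbex
  choose ka hka1 hka2 hka3 using fun b : ↥T => hAcof (jb b) (hjb1 b)
  set g : ↥T → I := fun b => ZF A (ka b) with hg
  have hsub : Set.range g ⊆ A := by
    rintro x ⟨b, rfl⟩
    exact hka3 b
  have hcof : ∀ a ∈ A, ∃ s ∈ Set.range g, a ≤ s := by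
    intro a ha
    obtain ⟨i, hiδ, hiA, hai⟩ := exists_high hdc ha
    obtain ⟨j₁, hij₁, hj₁δ, hj₁B⟩ := hBcof i hiδ
    obtain ⟨bval, hbT, hble⟩ := hTcoi (ZF A j₁) hj₁B
    set b : ↥T := ⟨bval, hbT⟩
    have hijb : i ≤ jb b := by
      by_contra hlt
      push_neg at hlt
      have h1 : jb b < j₁ := lt_of_lt_of_le hlt hij₁
      have h2 : ZF A j₁ < ZF A (jb b) := (zlt h1 hj₁δ).2 (hjb2 b)
      have h3 : ZF A (jb b) < bval := hjb3 b
      exact absurd (lt_trans (lt_of_le_of_lt hble h2) h3) (lt_irrefl _)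
    have hika : i ≤ ka b := le_trans hijb (hka1 b)
    have hle2 : ZF A i ≤ ZF A (ka b) := by
      rcases eq_or_lt_of_le hika with he | hl
      · rw [he]
      · exact le_of_lt ((zlt hl (hka2 b)).1 hiA)
    exact ⟨g b, Set.mem_range_self b, le_trans hai hle2⟩
  calc setCofinality A ≤ Cardinal.mk ↥(Set.range g) := setCofinality_le hsub hcof
    _ ≤ Cardinal.mk ↥T := Cardinal.mk_range_le
    _ = setCoinitiality (Aᶜ : Set I) := hTcard

/-- Symmetric version: the coinitiality of `Aᶜ` is at most the cofinality of `A`. -/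
theorem pinch_le₂ (hnomax : ∀ a ∈ A, ∃ a' ∈ A, a < a')
    (hAcof : ∀ i, i < Zδ A → ∃ j, i ≤ j ∧ j < Zδ A ∧ ZF A j ∈ A)
    (hBcof : ∀ i, i < Zδ A → ∃ j, i ≤ j ∧ j < Zδ A ∧ ZF A j ∉ A) :
    setCoinitiality (Aᶜ : Set I) ≤ setCofinality A := by
  obtain ⟨S, hSA, hScof, hScard⟩ := exists_cofinal_real A
  have hjaex : ∀ a : ↥S, ∃ j, j < Zδ A ∧ ZF A j ∈ A ∧ (a : I) < ZF A j := by
    intro a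
    obtain ⟨a', ha', hlt⟩ := hnomax (a : I) (hSA a.2)
    obtain ⟨j, hj, hjA, hle⟩ := exists_high hdc ha'
    exact ⟨j, hj, hjA, lt_of_lt_of_le hlt hle⟩
  choose ja hja1 hja2 hja3 using hjaex
  choose kb hkb1 hkb2 hkb3 using fun a : ↥S => hBcof (ja a) (hja1 a)
  set g : ↥S → I := fun a => ZF A (kb a) with hg
  have hsub : Set.range g ⊆ (Aᶜ : Set I) := by
    rintro x ⟨a, rfl⟩
    exact hkb3 a
  have hcoi : ∀ y ∈ (Aᶜ : Set I), ∃ s ∈ Set.range g, s ≤ y := by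
    intro y hy
    obtain ⟨j, hjδ, hjB, hjy⟩ := exists_low hdc hy
    obtain ⟨j₁, hjj₁, hj₁δ, hj₁A⟩ := hAcof j hjδ
    obtain ⟨aval, haS, hale⟩ := hScof (ZF A j₁) hj₁A
    set a : ↥S := ⟨aval, haS⟩
    have hjja : j ≤ ja a := by
      by_contra hlt
      push_neg at hlt
      have h1 : ja a < j₁ := lt_of_lt_of_le hlt hjj₁
      have h2 : ZF A (ja a) < ZF A j₁ := (zlt h1 hj₁δ).1 (hja2 a)
      have h3 : aval < ZF A (ja a) := hja3 a
      exact absurd (lt_trans h3 (lt_of_lt_of_le h2 hale)) (lt_irrefl _)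
    have hjkb : j ≤ kb a := le_trans hjja (hkb1 a)
    have hle2 : ZF A (kb a) ≤ ZF A j := by
      rcases eq_or_lt_of_le hjkb with he | hl
      · rw [he]
      · exact le_of_lt ((zlt hl (hkb2 a)).2 hjB)
    exact ⟨g a, Set.mem_range_self a, le_trans hle2 hjy⟩
  calc setCoinitiality (Aᶜ : Set I) ≤ Cardinal.mk ↥(Set.range g) := setCoinitiality_le hsub hcoi
    _ ≤ Cardinal.mk ↥S := Cardinal.mk_range_le
    _ = setCofinality A := hScard

/-- For an asymmetric cut, the process is eventually one-sided. -/
theorem EV_exists (hnomax : ∀ a ∈ A, ∃ a' ∈ A, a < a')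
    (hnomin : ∀ b ∈ Aᶜ, ∃ b' ∈ Aᶜ, b' < b)
    (hne : setCofinality A ≠ setCoinitiality (Aᶜ : Set I)) : ∃ i, EV A i := by
  rcases dichotomy A with h | ⟨h1, h2⟩
  · exact h
  · exact absurd (le_antisymm (pinch_le₁ hdc hnomin h1 h2) (pinch_le₂ hdc hnomax h1 h2)) hne

end Pinch

open Classical in
/-- The eventual side point. -/
noncomputable def istar (A : Set I) : Ordinal.{u} :=
  if h : ∃ i, EV A i then h.choose else 0

theorem istar_spec {A : Set I} (h : ∃ i, EV A i) : EV A (istar A) := by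
  unfold istar
  rw [dif_pos h]
  exact h.choose_spec

open Classical in
/-- The injection: eventual side point tagged with the side. -/
noncomputable def ΦA (A : Set I) : I ⊕ I :=
  if ZF A (istar A) ∈ A then Sum.inl (ZF A (istar A)) else Sum.inr (ZF A (istar A))

theorem regs_eq {A A' : Set I} {o : Ordinal.{u}}
    (h : ∀ j, j < o → ZF A j = ZF A' j ∧ ((ZF A j ∈ A) ↔ (ZF A' j ∈ A'))) :
    ZReg A (ZF A) o = ZReg A' (ZF A') o := by
  ext x
  simp only [ZReg, mem_setOf_eq]
  constructor
  · intro hx j hj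
    obtain ⟨e, i⟩ := h j hj
    constructor
    · intro hm
      rw [← e]
      exact (hx j hj).1 (i.mpr hm)
    · intro hm
      rw [← e]
      exact (hx j hj).2 fun hc => hm (i.mp hc)
  · intro hx j hj
    obtain ⟨e, i⟩ := h j hj
    constructor
    · intro hm
      rw [e]
      exact (hx j hj).1 (i.mp hm)
    · intro hm
      rw [e]
      exact (hx j hj).2 fun hc => hm (i.mpr hc)

theorem Zδ_eq_of_agree {A A' : Set I}
    (h : ∀ j, j < Zδ A ∨ j < Zδ A' → ZF A j = ZF A' j ∧ ((ZF A j ∈ A) ↔ (ZF A' j ∈ A'))) :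
    Zδ A = Zδ A' := by
  rcases lt_trichotomy (Zδ A) (Zδ A') with hl | he | hl
  · exfalso
    have hreg : ZReg A (ZF A) (Zδ A) = ZReg A' (ZF A') (Zδ A) :=
      regs_eq fun j hj => h j (Or.inl hj)
    have := reg_nonempty (A := A') hl
    rw [← hreg, Zδ_empty] at this
    exact Set.not_nonempty_empty this
  · exact he
  · exfalso
    have hreg : ZReg A (ZF A) (Zδ A') = ZReg A' (ZF A') (Zδ A') :=
      regs_eq fun j hj => h j (Or.inr hj)
    have := reg_nonempty (A := A) hl
    rw [hreg, Zδ_empty] at this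
    exact Set.not_nonempty_empty this

theorem eq_of_agree {A A' : Set I}
    (hdc : ∀ ⦃x a : I⦄, a ∈ A → x ≤ a → x ∈ A)
    (hdc' : ∀ ⦃x a : I⦄, a ∈ A' → x ≤ a → x ∈ A')
    (h : ∀ j, j < Zδ A ∨ j < Zδ A' → ZF A j = ZF A' j ∧ ((ZF A j ∈ A) ↔ (ZF A' j ∈ A'))) :
    A = A' := by
  have hδ : Zδ A = Zδ A' := Zδ_eq_of_agree h
  rw [A_char hdc, A_char hdc']
  ext x
  simp only [mem_setOf_eq]
  constructor
  · rintro ⟨j, hjδ, hjA, hle⟩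
    obtain ⟨he, hiff⟩ := h j (Or.inl hjδ)
    exact ⟨j, hδ ▸ hjδ, he ▸ hiff.mp hjA, he ▸ hle⟩
  · rintro ⟨j, hjδ, hjA, hle⟩
    obtain ⟨he, hiff⟩ := h j (Or.inr (hδ ▸ hjδ))
    exact ⟨j, hδ.symm ▸ hjδ, hiff.mpr hjA, he.symm ▸ hle⟩

/-- Main injectivity lemma. -/
theorem main_inj {A A' : Set I}
    (hdc : ∀ ⦃x a : I⦄, a ∈ A → x ≤ a → x ∈ A)
    (hdc' : ∀ ⦃x a : I⦄, a ∈ A' → x ≤ a → x ∈ A')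
    (hEV : ∃ i, EV A i) (hEV' : ∃ i, EV A' i)
    (hΦ : ΦA A = ΦA A') : A = A' := by
  classical
  obtain ⟨hi₁, hi₂⟩ := istar_spec hEV
  obtain ⟨hi₁', hi₂'⟩ := istar_spec hEV'
  have hpb : ZF A (istar A) = ZF A' (istar A') ∧
      ((ZF A (istar A) ∈ A) ↔ (ZF A' (istar A') ∈ A')) := by
    by_cases h1 : ZF A (istar A) ∈ A <;> by_cases h2 : ZF A' (istar A') ∈ A'
    · refine ⟨?_, iff_of_true h1 h2⟩
      simpa [ΦA, h1, h2] using hΦ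
    · exfalso; simp [ΦA, h1, h2] at hΦ
    · exfalso; simp [ΦA, h1, h2] at hΦ
    · refine ⟨?_, iff_of_false h1 h2⟩
      simpa [ΦA, h1, h2] using hΦ
  obtain ⟨hp, hb⟩ := hpb
  by_cases hDne : ({j : Ordinal.{u} |
      ¬(ZF A j = ZF A' j ∧ ((ZF A j ∈ A) ↔ (ZF A' j ∈ A')))}).Nonempty
  swap
  · -- agreement everywhere
    apply eq_of_agree hdc hdc'
    intro j _
    by_contra hc
    exact hDne ⟨j, hc⟩
  · set D : Set Ordinal.{u} :=
      {j : Ordinal.{u} | ¬(ZF A j = ZF A' j ∧ ((ZF A j ∈ A) ↔ (ZF A' j ∈ A')))} with hD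
    set j₀ := Ordinal.lt_wf.min D hDne with hj₀def
    have hagree : ∀ j, j < j₀ → ZF A j = ZF A' j ∧ ((ZF A j ∈ A) ↔ (ZF A' j ∈ A')) := by
      intro j hj
      by_contra hc
      exact Ordinal.lt_wf.not_lt_min D hc hj
    have hj₀mem : j₀ ∈ D := Ordinal.lt_wf.min_mem D hDne
    -- if j₀ is at/after one of the lengths, the cuts agree entirely; contradiction with j₀ ∈ D
    by_cases hj₀δ : j₀ < Zδ A ∧ j₀ < Zδ A'
    swap
    · exfalso
      have hAA' : A = A' := by
        apply eq_of_agree hdc hdc'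
        intro j hj
        apply hagree
        -- show j < j₀ : both δ's are ≤ j₀ or... need: δ_min ≤ j₀ and δ's equal
        rcases not_and_or.mp hj₀δ with hnl | hnl
        · -- Zδ A ≤ j₀
          have hδle : Zδ A ≤ j₀ := not_lt.mp hnl
          have hδ'le : Zδ A' ≤ Zδ A := by
            by_contra hlt
            push_neg at hlt
            have hreg : ZReg A (ZF A) (Zδ A) = ZReg A' (ZF A') (Zδ A) :=
              regs_eq fun j' hj' => hagree j' (lt_of_lt_of_le hj' hδle)
            have := reg_nonempty (A := A') hlt
            rw [← hreg, Zδ_empty] at this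
            exact Set.not_nonempty_empty this
          rcases hj with hj | hj
          · exact lt_of_lt_of_le hj hδle
          · exact lt_of_lt_of_le hj (le_trans hδ'le hδle)
        · have hδle : Zδ A' ≤ j₀ := not_lt.mp hnl
          have hδ'le : Zδ A ≤ Zδ A' := by
            by_contra hlt
            push_neg at hlt
            have hreg : ZReg A (ZF A) (Zδ A') = ZReg A' (ZF A') (Zδ A') :=
              regs_eq fun j' hj' => hagree j' (lt_of_lt_of_le hj' hδle)
            have := reg_nonempty (A := A) hlt
            rw [hreg, Zδ_empty] at this
            exact Set.not_nonempty_empty this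
          rcases hj with hj | hj
          · exact lt_of_lt_of_le hj (le_trans hδ'le hδle)
          · exact lt_of_lt_of_le hj hδle
      apply hj₀mem
      subst hAA'
      exact ⟨rfl, Iff.rfl⟩
    obtain ⟨hj₀A, hj₀A'⟩ := hj₀δ
    have hq : ZF A j₀ = ZF A' j₀ := by
      have hreg : ZReg A (ZF A) j₀ = ZReg A' (ZF A') j₀ := regs_eq hagree
      rw [ZF_def, ZF_def]
      simp only [hreg]
    have hsd : ¬((ZF A j₀ ∈ A) ↔ (ZF A' j₀ ∈ A')) := fun hiff => hj₀mem ⟨hq, hiff⟩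
    exfalso
    rcases lt_trichotomy (istar A) j₀ with h1 | h1 | h1 <;>
      rcases lt_trichotomy (istar A') j₀ with h2 | h2 | h2
    · -- both before j₀: sides at j₀ agree, contradiction
      have s1 : (ZF A j₀ ∈ A) ↔ (ZF A (istar A) ∈ A) := hi₂ j₀ (le_of_lt h1) hj₀A
      have s2 : (ZF A' j₀ ∈ A') ↔ (ZF A' (istar A') ∈ A') := hi₂' j₀ (le_of_lt h2) hj₀A'
      exact hsd (s1.trans (hb.trans s2.symm))
    · have s1 : (ZF A j₀ ∈ A) ↔ (ZF A (istar A) ∈ A) := hi₂ j₀ (le_of_lt h1) hj₀A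
      have s2 : (ZF A' j₀ ∈ A') ↔ (ZF A' (istar A') ∈ A') := by rw [h2]
      exact hsd (s1.trans (hb.trans s2.symm))
    · -- istar A < j₀ < istar A' :  p is a common value before j₀, also value of A' branch after j₀
      have e1 : ZF A (istar A) = ZF A' (istar A) := (hagree _ h1).1
      have : ZF A' (istar A) = ZF A' (istar A') := by rw [← e1, hp]
      have heq : istar A = istar A' := ZF_inj_branch (lt_trans h1 hj₀A') hi₁' this
      exact absurd heq (ne_of_lt (lt_trans h1 h2))
    · have s1 : (ZF A j₀ ∈ A) ↔ (ZF A (istar A) ∈ A) := by rw [h1]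
      have s2 : (ZF A' j₀ ∈ A') ↔ (ZF A' (istar A') ∈ A') := hi₂' j₀ (le_of_lt h2) hj₀A'
      exact hsd (s1.trans (hb.trans s2.symm))
    · have s1 : (ZF A j₀ ∈ A) ↔ (ZF A (istar A) ∈ A) := by rw [h1]
      have s2 : (ZF A' j₀ ∈ A') ↔ (ZF A' (istar A') ∈ A') := by rw [h2]
      exact hsd (s1.trans (hb.trans s2.symm))
    · -- istar A = j₀ < istar A' : p = value at j₀, but A' branch moves strictly past it
      have hpq : ZF A' (istar A') = ZF A' j₀ := by rw [← hp, h1, hq]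
      by_cases hs : ZF A' j₀ ∈ A'
      · have := (zlt h2 hi₁').1 hs
        rw [hpq] at this
        exact lt_irrefl _ this
      · have := (zlt h2 hi₁').2 hs
        rw [hpq] at this
        exact lt_irrefl _ this
    · -- istar A' < j₀ < istar A
      have e1 : ZF A' (istar A') = ZF A (istar A') := ((hagree _ h2).1).symm
      have : ZF A (istar A') = ZF A (istar A) := by rw [← e1, hp]
      have heq : istar A' = istar A := ZF_inj_branch (lt_trans h2 hj₀A) hi₁ this
      exact absurd heq (ne_of_lt (lt_trans h2 h1))
    · -- istar A' = j₀ < istar A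
      have hpq : ZF A (istar A) = ZF A j₀ := by rw [hp, h2, ← hq]
      by_cases hs : ZF A j₀ ∈ A
      · have := (zlt h1 hi₁).1 hs
        rw [hpq] at this
        exact lt_irrefl _ this
      · have := (zlt h1 hi₁).2 hs
        rw [hpq] at this
        exact lt_irrefl _ this
    · -- j₀ < both istars : p on strictly opposite sides of the common value at j₀
      by_cases hs : ZF A j₀ ∈ A
      · have hs' : ZF A' j₀ ∉ A' := fun hc => hsd (iff_of_true hs hc)
        have hgt : ZF A j₀ < ZF A (istar A) := (zlt h1 hi₁).1 hs
        have hlt : ZF A' (istar A') < ZF A' j₀ := (zlt h2 hi₁').2 hs'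
        rw [← hp, ← hq] at hlt
        exact lt_irrefl _ (lt_trans hgt hlt)
      · have hs' : ZF A' j₀ ∈ A' := by
          by_contra hc
          exact hsd (iff_of_false hs hc)
        have hgt : ZF A (istar A) < ZF A j₀ := (zlt h1 hi₁).2 hs
        have hlt : ZF A' j₀ < ZF A' (istar A') := (zlt h2 hi₁').1 hs'
        rw [← hp, ← hq] at hlt
        exact lt_irrefl _ (lt_trans hgt hlt)

end Stmt13Aux

/-- Classical theorem cited in Shelah 950 (Question a29, proof of Claim a20): an infinite
linear order `I` has at most `|I|` gaps `(A, B)` whose two cofinalities differ, i.e. with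
the cofinality of `A` different from the coinitiality of `B`. -/
theorem stmt_13 {I : Type u} [LinearOrder I] [Infinite I] :
    Cardinal.mk ↥{p : Set I × Set I |
        IsGapPair p.1 p.2 ∧ setCofinality p.1 ≠ setCoinitiality p.2} ≤
      Cardinal.mk I := by
  classical
  set W := {p : Set I × Set I |
    IsGapPair p.1 p.2 ∧ setCofinality p.1 ≠ setCoinitiality p.2} with hW
  have hBcompl : ∀ p ∈ W, p.2 = p.1ᶜ := by
    rintro ⟨A, B⟩ ⟨⟨hu, hlt, _, _, _, _⟩, _⟩
    ext x
    simp only [Set.mem_compl_iff]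
    constructor
    · intro hxB hxA
      exact lt_irrefl x (hlt x hxA x hxB)
    · intro hxA
      rcases (Set.eq_univ_iff_forall.mp hu x) with hx | hx
      · exact absurd hx hxA
      · exact hx
  have hdown : ∀ p ∈ W, ∀ ⦃x a : I⦄, a ∈ p.1 → x ≤ a → x ∈ p.1 := by
    rintro ⟨A, B⟩ hp x a ha hxa
    obtain ⟨⟨hu, hlt, _, _, _, _⟩, _⟩ := hp
    by_contra hx
    have hxB : x ∈ B := by
      rcases (Set.eq_univ_iff_forall.mp hu x) with h | h
      · exact absurd h hx
      · exact h
    exact absurd hxa (not_le.mpr (hlt a ha x hxB))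
  have hEVall : ∀ p : ↥W, ∃ i, Stmt13Aux.EV (p : Set I × Set I).1 i := by
    rintro ⟨⟨A, B⟩, hp⟩
    obtain ⟨⟨hu, hlt, hAne, hBne, hnomax, hnomin⟩, hne⟩ := hp
    have hBc : B = Aᶜ := hBcompl ⟨A, B⟩ ⟨⟨hu, hlt, hAne, hBne, hnomax, hnomin⟩, hne⟩
    have hdc : ∀ ⦃x a : I⦄, a ∈ A → x ≤ a → x ∈ A :=
      hdown ⟨A, B⟩ ⟨⟨hu, hlt, hAne, hBne, hnomax, hnomin⟩, hne⟩
    apply Stmt13Aux.EV_exists hdc hnomax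
    · rw [← hBc]; exact hnomin
    · rw [← hBc]; exact hne
  have hinj : Function.Injective fun p : ↥W => Stmt13Aux.ΦA (p : Set I × Set I).1 := by
    rintro c c' h
    have hAeq : (c : Set I × Set I).1 = (c' : Set I × Set I).1 :=
      Stmt13Aux.main_inj (hdown _ c.2) (hdown _ c'.2) (hEVall c) (hEVall c') h
    apply Subtype.ext
    apply Prod.ext hAeq
    rw [hBcompl _ c.2, hBcompl _ c'.2, hAeq]
  calc Cardinal.mk ↥W ≤ Cardinal.mk (I ⊕ I) := Cardinal.mk_le_of_injective hinj
    _ = Cardinal.mk I + Cardinal.mk I := by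
        simp [Cardinal.mk_sum]
    _ = Cardinal.mk I := Cardinal.add_eq_self (Cardinal.infinite_iff.mp inferInstance)
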